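/- arXiv:1906.01059 — 4 statements merged into one kernel-verified Lean document; each statement's English description precedes it below -/
import Mathlib

section
/- Suppose a sequence of complex numbers (a_n)_{n≥0} satisfies a₀ = φ = (1+√5)/2, a₁ = 1, and for all n ≥ 2, (2φ)^n · a_n · n! = ∑_{k=0}^{n} C(n,k) · (k! a_k) · ((n-k)! a_{n-k}) where a_n are interpreted as f^{(n)}(0)/n! — equivalently a_n = (∑_{k=1}^{n-1} C(n,k) k! a_k (n-k)! a_{n-k}) / (n! ((2φ)^n - 2φ)) for n ≥ 2. Then |n! · a_n| ≤ 1 for all n ≥ 1. -/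
lemma sum_choose_Ico_eq (n : ℕ) (hn : 2 ≤ n) :
    ∑ k ∈ Finset.Ico 1 n, n.choose k = 2 ^ n - 2 := by
  have h := Nat.sum_range_choose n
  rw [Finset.sum_range_succ] at h
  rw [Finset.range_eq_Ico, Finset.sum_eq_sum_Ico_succ_bot (by omega : 0 < n)] at h
  simp [Nat.choose_zero_right, Nat.choose_self] at h
  omega

theorem taylor_coeffs_bounded (φ : ℝ) (hφ : φ = (1 + Real.sqrt 5) / 2)
    (a : ℕ → ℂ) (h0 : a 0 = (φ : ℂ)) (h1 : a 1 = 1)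
    (hrec : ∀ n ≥ 2, a n =
      (∑ k ∈ Finset.Ico 1 n, (n.choose k : ℂ) * ((k.factorial : ℂ) * a k) *
        (((n - k).factorial : ℂ) * a (n - k))) /
      ((n.factorial : ℂ) * ((2 * φ : ℂ) ^ n - 2 * φ))) :
    ∀ n ≥ 1, ‖(n.factorial : ℂ) * a n‖ ≤ 1 := by
  have h5 : (2:ℝ) ≤ Real.sqrt 5 := by
    nlinarith [Real.sq_sqrt (show (0:ℝ) ≤ 5 by norm_num), Real.sqrt_nonneg 5]
  have hφ1 : (1:ℝ) ≤ φ := by rw [hφ]; linarith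
  intro n hn
  induction n using Nat.strong_induction_on with
  | _ n ih =>
    rcases eq_or_lt_of_le hn with h1' | h2
    · rw [← h1']
      simp [h1]
    · -- n ≥ 2
      have h2' : 2 ≤ n := h2
      set S : ℂ := ∑ k ∈ Finset.Ico 1 n, (n.choose k : ℂ) * ((k.factorial : ℂ) * a k) *
        (((n - k).factorial : ℂ) * a (n - k)) with hS
      have hA : φ ≤ φ ^ n := le_self_pow₀ hφ1 (by omega)
      have hB : (4:ℝ) ≤ 2 ^ n := by
        calc (4:ℝ) = 2 ^ 2 := by norm_num
        _ ≤ 2 ^ n := pow_le_pow_right₀ (by norm_num) h2'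
      have h2pos : (0:ℝ) ≤ (2:ℝ)^n := by positivity
      have hkey : (2:ℝ) ^ n - 2 ≤ (2 * φ) ^ n - 2 * φ := by
        rw [mul_pow]
        nlinarith [mul_le_mul_of_nonneg_left hA h2pos]
      have hDpos : (0:ℝ) < (2 * φ) ^ n - 2 * φ := by linarith
      have hne : (n.factorial : ℂ) ≠ 0 := Nat.cast_ne_zero.mpr n.factorial_ne_zero
      have hDC : ((2 * (φ:ℂ)) ^ n - 2 * (φ:ℂ)) = (((2*φ)^n - 2*φ : ℝ) : ℂ) := by
        push_cast; ring
      have heq : (n.factorial : ℂ) * a n = S / (((2*φ)^n - 2*φ : ℝ) : ℂ) := by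
        rw [hrec n h2', ← hS, mul_div_assoc', mul_div_mul_left _ _ hne, hDC]
      have step1 : ‖S‖ ≤ ∑ k ∈ Finset.Ico 1 n, ‖
          ((n.choose k : ℂ) * ((k.factorial : ℂ) * a k) *
            (((n - k).factorial : ℂ) * a (n - k)))‖ :=
        norm_sum_le _ _
      have step2 : ∑ k ∈ Finset.Ico 1 n, ‖
          ((n.choose k : ℂ) * ((k.factorial : ℂ) * a k) *
            (((n - k).factorial : ℂ) * a (n - k)))‖
          ≤ ∑ k ∈ Finset.Ico 1 n, (n.choose k : ℝ) := by
        apply Finset.sum_le_sum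
        intro k hk
        rw [Finset.mem_Ico] at hk
        have hk1 : 1 ≤ k := hk.1
        have hkn : k < n := hk.2
        have ihk := ih k hkn hk1
        have ihnk := ih (n - k) (by omega) (by omega)
        rw [norm_mul, norm_mul, Complex.norm_natCast]
        have hcnn : (0:ℝ) ≤ (n.choose k : ℝ) := by positivity
        have habsnn : (0:ℝ) ≤ ‖(k.factorial : ℂ) * a k‖ :=
          norm_nonneg _
        rw [mul_assoc]
        exact mul_le_of_le_one_right hcnn
          (mul_le_one₀ ihk (norm_nonneg _) ihnk)
      have step3 : ∑ k ∈ Finset.Ico 1 n, (n.choose k : ℝ) = (2:ℝ)^n - 2 := by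
        rw [← Nat.cast_sum, sum_choose_Ico_eq n h2']
        have h2le : (2:ℕ) ≤ 2^n := by
          have : (2:ℕ)^1 ≤ 2^n := Nat.pow_le_pow_right (by norm_num) (by omega)
          simpa using this
        push_cast [h2le]
        ring
      have hSbound : ‖S‖ ≤ (2:ℝ)^n - 2 := by
        calc ‖S‖ ≤ _ := step1
        _ ≤ _ := step2
        _ = _ := step3
      rw [heq, norm_div, Complex.norm_real, Real.norm_eq_abs, abs_of_pos hDpos, div_le_one hDpos]
      linarith
end

section
/- The power series ∑_{n≥0} b_n z^n with b₀ = φ, b₁ = 1, b_n = (∑_{k=1}^{n-1} C(n,k) b_k b_{n-k}) / ((2φ)^n - 2φ) for n ≥ 2 has infinite radius of convergence, hence defines an entire function f. -/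
open Finset in
/-- The key decay estimate: `|b n| ≤ 1 / √(n!)` for `n ≥ 1`. -/
lemma b_decay (φ : ℝ) (hφ : φ = (1 + Real.sqrt 5) / 2)
    (b : ℕ → ℝ) (h1 : b 1 = 1)
    (hrec : ∀ n ≥ 2, b n =
      (∑ k ∈ Finset.Ico 1 n, (n.choose k : ℝ) * b k * b (n - k)) /
      ((2 * φ) ^ n - 2 * φ)) :
    ∀ n, 1 ≤ n → |b n| ≤ 1 / Real.sqrt (Nat.factorial n) := by
  have h5 : Real.sqrt 5 ^ 2 = 5 := Real.sq_sqrt (by norm_num)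
  have h5n : 0 ≤ Real.sqrt 5 := Real.sqrt_nonneg 5
  have h5lb : 2 ≤ Real.sqrt 5 := by nlinarith
  have h5ub : Real.sqrt 5 ≤ 3 := by nlinarith
  have h2 : Real.sqrt 2 ^ 2 = 2 := Real.sq_sqrt (by norm_num)
  have h2n : 0 ≤ Real.sqrt 2 := Real.sqrt_nonneg 2
  have h2ub : Real.sqrt 2 ≤ 3 / 2 := by nlinarith
  have h2lb : 1 ≤ Real.sqrt 2 := by nlinarith
  have hφ3 : 3 ≤ 2 * φ := by rw [hφ]; linarith
  intro n
  induction n using Nat.strong_induction_on with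
  | _ n ih =>
    intro hn1
    rcases eq_or_lt_of_le hn1 with h | h
    · rw [← h]; simp [h1]
    have hn2 : 2 ≤ n := h
    -- positivity of the denominator
    have hpow : (2 * φ) ^ 2 ≤ (2 * φ) ^ n :=
      pow_le_pow_right₀ (by linarith) hn2
    have hD : 0 < (2 * φ) ^ n - 2 * φ := by nlinarith
    -- term-wise bound
    have hterm : ∀ k ∈ Finset.Ico 1 n,
        |(n.choose k : ℝ) * b k * b (n - k)| ≤
          (n.choose k : ℝ) * (Real.sqrt 2 ^ n / Real.sqrt (Nat.factorial n)) := by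
      intro k hk
      simp only [Finset.mem_Ico] at hk
      obtain ⟨hk1, hkn⟩ := hk
      have hbk : |b k| ≤ 1 / Real.sqrt (Nat.factorial k) := ih k hkn hk1
      have hbnk : |b (n - k)| ≤ 1 / Real.sqrt (Nat.factorial (n - k)) := by
        refine ih (n - k) (by omega) (by omega)
      have hks : 0 < Real.sqrt (Nat.factorial k) := Real.sqrt_pos.2 (by positivity)
      have hnks : 0 < Real.sqrt (Nat.factorial (n - k)) := Real.sqrt_pos.2 (by positivity)
      have hns : 0 < Real.sqrt (Nat.factorial n) := Real.sqrt_pos.2 (by positivity)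
      have hfac : (Nat.factorial n : ℝ) ≤ 2 ^ n * (Nat.factorial k * Nat.factorial (n - k)) := by
        have hc : n.choose k ≤ 2 ^ n := by
          calc n.choose k ≤ ∑ m ∈ range (n + 1), n.choose m :=
                Finset.single_le_sum (f := fun m => n.choose m)
                  (fun _ _ => Nat.zero_le _) (by simp; omega)
            _ = 2 ^ n := Nat.sum_range_choose n
        have := Nat.choose_mul_factorial_mul_factorial (le_of_lt hkn)
        have hle : Nat.factorial n ≤ 2 ^ n * (Nat.factorial k * Nat.factorial (n - k)) := by
          calc Nat.factorial n = n.choose k * Nat.factorial k * Nat.factorial (n - k) := this.symm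
            _ ≤ 2 ^ n * Nat.factorial k * Nat.factorial (n - k) := by
                exact Nat.mul_le_mul_right _ (Nat.mul_le_mul_right _ hc)
            _ = 2 ^ n * (Nat.factorial k * Nat.factorial (n - k)) := by ring
        exact_mod_cast hle
      -- 1/(√k! √(n-k)!) ≤ (√2)^n / √n!
      have hkey : 1 / (Real.sqrt (Nat.factorial k) * Real.sqrt (Nat.factorial (n - k))) ≤
          Real.sqrt 2 ^ n / Real.sqrt (Nat.factorial n) := by
        rw [div_le_div_iff₀ (by positivity) hns]
        have hmono : Real.sqrt (Nat.factorial n) ≤ Real.sqrt (2 ^ n * (Nat.factorial k * Nat.factorial (n - k))) :=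
          Real.sqrt_le_sqrt hfac
        have hsq2 : Real.sqrt ((2:ℝ) ^ n) = Real.sqrt 2 ^ n := by
          have hpow2 : ((Real.sqrt 2) ^ n) ^ 2 = (2:ℝ) ^ n := by
            rw [← pow_mul, mul_comm n 2, pow_mul, h2]
          rw [← hpow2, Real.sqrt_sq (by positivity)]
        calc 1 * Real.sqrt (Nat.factorial n) = Real.sqrt (Nat.factorial n) := one_mul _
          _ ≤ Real.sqrt (2 ^ n * (Nat.factorial k * Nat.factorial (n - k))) := hmono
          _ = Real.sqrt 2 ^ n * (Real.sqrt (Nat.factorial k) * Real.sqrt (Nat.factorial (n - k))) := by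
              rw [Real.sqrt_mul (by positivity), Real.sqrt_mul (by positivity), hsq2]
      calc |(n.choose k : ℝ) * b k * b (n - k)|
          = (n.choose k : ℝ) * |b k| * |b (n - k)| := by
            rw [abs_mul, abs_mul, Nat.abs_cast]
        _ ≤ (n.choose k : ℝ) * (1 / Real.sqrt (Nat.factorial k)) * (1 / Real.sqrt (Nat.factorial (n - k))) := by
            gcongr
        _ = (n.choose k : ℝ) * (1 / (Real.sqrt (Nat.factorial k) * Real.sqrt (Nat.factorial (n - k)))) := by
            ring
        _ ≤ (n.choose k : ℝ) * (Real.sqrt 2 ^ n / Real.sqrt (Nat.factorial n)) := by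
            gcongr
    -- sum of binomials over Ico 1 n
    have hsum : ∑ k ∈ Finset.Ico 1 n, (n.choose k : ℝ) = 2 ^ n - 2 := by
      have e0 : ∑ k ∈ Finset.Ico 0 (n + 1), (n.choose k : ℝ) = 2 ^ n := by
        rw [← Finset.range_eq_Ico]
        exact_mod_cast Nat.sum_range_choose n
      rw [Finset.sum_eq_sum_Ico_succ_bot (by omega) (fun k => (n.choose k : ℝ))] at e0
      rw [Finset.sum_Ico_succ_top (by omega) (fun k => (n.choose k : ℝ))] at e0
      simp only [Nat.choose_zero_right, Nat.choose_self, Nat.cast_one] at e0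
      linarith
    -- numerator bound
    have hnum : |∑ k ∈ Finset.Ico 1 n, (n.choose k : ℝ) * b k * b (n - k)| ≤
        ((2 * φ) ^ n - 2 * φ) / Real.sqrt (Nat.factorial n) := by
      have hns : 0 < Real.sqrt (Nat.factorial n) := Real.sqrt_pos.2 (by positivity)
      calc |∑ k ∈ Finset.Ico 1 n, (n.choose k : ℝ) * b k * b (n - k)|
          ≤ ∑ k ∈ Finset.Ico 1 n, |(n.choose k : ℝ) * b k * b (n - k)| :=
            Finset.abs_sum_le_sum_abs _ _
        _ ≤ ∑ k ∈ Finset.Ico 1 n, (n.choose k : ℝ) * (Real.sqrt 2 ^ n / Real.sqrt (Nat.factorial n)) :=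
            Finset.sum_le_sum hterm
        _ = (2 ^ n - 2) * (Real.sqrt 2 ^ n / Real.sqrt (Nat.factorial n)) := by
            rw [← Finset.sum_mul, hsum]
        _ ≤ ((2 * φ) ^ n - 2 * φ) / Real.sqrt (Nat.factorial n) := by
            rw [← mul_div_assoc, div_le_div_iff₀ hns hns]
            have key : (2 ^ n - 2) * Real.sqrt 2 ^ n ≤ (2 * φ) ^ n - 2 * φ := by
              have e1 : (2 : ℝ) ^ n * Real.sqrt 2 ^ n = (2 * Real.sqrt 2) ^ n := by
                rw [mul_pow]
              have e2 : (2 * Real.sqrt 2) ^ n ≤ (2 * φ) ^ n := by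
                apply pow_le_pow_left₀ (by positivity)
                rw [hφ]; nlinarith
              have e3 : (2 : ℝ) ≤ Real.sqrt 2 ^ n := by
                calc (2 : ℝ) = Real.sqrt 2 ^ 2 := h2.symm
                  _ ≤ Real.sqrt 2 ^ n := pow_le_pow_right₀ h2lb hn2
              have e4 : 2 * φ ≤ 4 := by rw [hφ]; linarith
              nlinarith
            gcongr
    -- conclude
    have hns' : 0 < Real.sqrt (Nat.factorial n) := Real.sqrt_pos.2 (by positivity)
    rw [hrec n hn2, abs_div, abs_of_pos hD, div_le_div_iff₀ hD hns']
    have : |∑ k ∈ Finset.Ico 1 n, (n.choose k : ℝ) * b k * b (n - k)| * Real.sqrt (Nat.factorial n)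
        ≤ ((2 * φ) ^ n - 2 * φ) / Real.sqrt (Nat.factorial n) * Real.sqrt (Nat.factorial n) := by
      gcongr
    rw [div_mul_cancel₀ _ (ne_of_gt hns')] at this
    linarith


theorem power_series_entire (φ : ℝ) (hφ : φ = (1 + Real.sqrt 5) / 2)
    (b : ℕ → ℝ) (h0 : b 0 = φ) (h1 : b 1 = 1)
    (hrec : ∀ n ≥ 2, b n =
      (∑ k ∈ Finset.Ico 1 n, (n.choose k : ℝ) * b k * b (n - k)) /
      ((2 * φ) ^ n - 2 * φ)) :
    ∃ f : ℂ → ℂ, Differentiable ℂ f ∧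
      ∀ z : ℂ, HasSum (fun n => (b n : ℂ) * z ^ n) (f z) := by
  have hdecay := b_decay φ hφ b h1 hrec
  set p : FormalMultilinearSeries ℂ ℂ ℂ :=
    FormalMultilinearSeries.ofScalars ℂ (fun n => ((b n : ℝ) : ℂ)) with hp
  -- summability of ‖b n‖ * r ^ n for any r ≥ 0
  have hsumm : ∀ r : ℝ, 0 ≤ r → Summable (fun n => |b n| * r ^ n) := by
    intro r hr
    set s : ℝ := max r 1 with hs
    have hs1 : 1 ≤ s := le_max_right _ _
    have hs0 : 0 ≤ s := by linarith
    set C : ℝ := max |b 0| 1 with hC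
    have hC1 : 1 ≤ C := le_max_right _ _
    have hsummg : Summable (fun n => C * ((4 * s ^ 2) ^ n / (Nat.factorial n) + (1 / 4) ^ n)) :=
      ((Real.summable_pow_div_factorial (4 * s ^ 2)).add
        (summable_geometric_of_lt_one (by norm_num) (by norm_num))).mul_left C
    apply hsummg.of_nonneg_of_le (fun n => by positivity)
    intro n
    rcases Nat.eq_zero_or_pos n with h | h
    · subst h
      simp only [pow_zero, mul_one, Nat.factorial_zero]
      calc |b 0| ≤ C := le_max_left _ _
        _ ≤ C * ((4 * s ^ 2) ^ 0 / (Nat.factorial 0) + (1 / 4) ^ 0) := by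
            simp; linarith
    · have hb := hdecay n h
      have hns : 0 < Real.sqrt (Nat.factorial n) := Real.sqrt_pos.2 (by positivity)
      have step1 : |b n| * r ^ n ≤ s ^ n / Real.sqrt (Nat.factorial n) := by
        calc |b n| * r ^ n ≤ (1 / Real.sqrt (Nat.factorial n)) * s ^ n := by
              gcongr
              exact le_max_left _ _
          _ = s ^ n / Real.sqrt (Nat.factorial n) := by ring
      have step2 : s ^ n / Real.sqrt (Nat.factorial n) ≤
          (1 / 2) * ((4 * s ^ 2) ^ n / (Nat.factorial n) + (1 / 4) ^ n) := by
        have hfn : (0 : ℝ) < (Nat.factorial n : ℝ) := by positivity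
        set A : ℝ := (4 * s ^ 2) ^ n / (Nat.factorial n) with hA
        set B : ℝ := ((1 : ℝ) / 4) ^ n with hB
        have hA0 : 0 ≤ A := by positivity
        have hB0 : 0 ≤ B := by positivity
        have hAB : A * B = (s ^ n) ^ 2 / (Nat.factorial n) := by
          rw [hA, hB, div_mul_eq_mul_div, ← mul_pow]
          have h44 : (4 * s ^ 2) * ((1 : ℝ) / 4) = s ^ 2 := by ring
          rw [h44, ← pow_mul, ← pow_mul, mul_comm n 2]
        have e1 : s ^ n / Real.sqrt (Nat.factorial n) = Real.sqrt (A * B) := by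
          rw [hAB, Real.sqrt_div (by positivity), Real.sqrt_sq (by positivity)]
        calc s ^ n / Real.sqrt (Nat.factorial n) = Real.sqrt (A * B) := e1
          _ ≤ Real.sqrt (((A + B) / 2) ^ 2) :=
              Real.sqrt_le_sqrt (by nlinarith [sq_nonneg (A - B)])
          _ = (A + B) / 2 := Real.sqrt_sq (by positivity)
          _ = (1 / 2) * (A + B) := by ring
      calc |b n| * r ^ n ≤ (1 / 2) * ((4 * s ^ 2) ^ n / (Nat.factorial n) + (1 / 4) ^ n) :=
            le_trans step1 step2
        _ ≤ C * ((4 * s ^ 2) ^ n / (Nat.factorial n) + (1 / 4) ^ n) := by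
            gcongr
            linarith
  have hradius : p.radius = ⊤ := by
    apply p.radius_eq_top_of_summable_norm
    intro r
    have := hsumm r r.coe_nonneg
    apply this.congr
    intro n
    rw [hp, FormalMultilinearSeries.ofScalars_norm, Complex.norm_real, Real.norm_eq_abs]
  have hball : HasFPowerSeriesOnBall p.sum p 0 p.radius :=
    p.hasFPowerSeriesOnBall (by rw [hradius]; exact ENNReal.zero_lt_top)
  refine ⟨p.sum, ?_, ?_⟩
  · intro z
    have hz : z ∈ EMetric.ball (0 : ℂ) p.radius := by
      rw [hradius]; exact edist_lt_top z 0
    exact ((hball.analyticAt_of_mem (by simpa [hradius] using hz)).differentiableAt)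
  · intro z
    have hz : z ∈ EMetric.ball (0 : ℂ) p.radius := by
      rw [hradius]; exact edist_lt_top z 0
    have := p.hasSum hz
    rw [FormalMultilinearSeries.sum]
    convert this using 2 with n
    · rfl
    rw [hp]
    rw [FormalMultilinearSeries.ofScalars_apply_eq]
    simp [smul_eq_mul]
    rfl
end

section
/- If f is entire with f(2φz) = f(z)² − 1, f(0) = φ, f'(0) = 1, then the infinite product ∏_{n=1}^{∞} φ^{-1} f((2φ)^{-n} z) converges and equals f'(z) for every z ∈ ℂ. -/
theorem derivative_infinite_product (φ : ℝ) (hφ : φ = (1 + Real.sqrt 5) / 2)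
    (f : ℂ → ℂ) (hf : Differentiable ℂ f)
    (heq : ∀ z : ℂ, f (2 * φ * z) = f z ^ 2 - 1)
    (h0 : f 0 = (φ : ℂ)) (h1 : deriv f 0 = 1) :
    ∀ z : ℂ, Filter.Tendsto
      (fun N => ∏ n ∈ Finset.Icc 1 N, (φ : ℂ)⁻¹ * f (((2 * φ : ℂ)⁻¹) ^ n * z))
      Filter.atTop (nhds (deriv f z)) := by
  have hφ1 : (1:ℝ) < φ := by
    have h5 : Real.sqrt 5 > 2 := by
      nlinarith [Real.sq_sqrt (by norm_num : (5:ℝ) ≥ 0), Real.sqrt_nonneg 5]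
    rw [hφ]; linarith
  have hφ0 : (φ : ℂ) ≠ 0 := by
    simp only [ne_eq, Complex.ofReal_eq_zero]; linarith
  have h2φ : (2 * φ : ℂ) ≠ 0 := by
    simp only [ne_eq, mul_eq_zero]; push_neg; exact ⟨two_ne_zero, hφ0⟩
  -- derivative of functional equation
  have hder : ∀ z : ℂ, (φ : ℂ) * deriv f (2 * φ * z) = f z * deriv f z := by
    intro z
    have h1' : HasDerivAt (fun w => f (2 * φ * w))
        (deriv f (2 * φ * z) * (2 * φ)) z := by
      have hg : HasDerivAt (fun w : ℂ => 2 * φ * w) (2 * φ) z := by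
        simpa using (hasDerivAt_id z).const_mul (2 * (φ:ℂ))
      exact ((hf (2 * φ * z)).hasDerivAt).comp z hg
    have h2' : HasDerivAt (fun w => f w ^ 2 - 1)
        (2 * f z ^ 1 * deriv f z) z :=
      (((hf z).hasDerivAt).pow 2).sub_const 1
    have hfun : (fun w => f (2 * φ * w)) = fun w => f w ^ 2 - 1 := funext heq
    have := (hfun ▸ h1').unique h2'
    linear_combination this / 2
  have key : ∀ z : ℂ, deriv f z =
      (φ : ℂ)⁻¹ * f ((2 * φ : ℂ)⁻¹ * z) * deriv f ((2 * φ : ℂ)⁻¹ * z) := by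
    intro z
    have := hder ((2 * φ : ℂ)⁻¹ * z)
    rw [show (2 * (φ:ℂ)) * ((2 * φ : ℂ)⁻¹ * z) = z by field_simp] at this
    rw [mul_assoc, inv_mul_eq_div, eq_div_iff hφ0]
    linear_combination this
  have prodid : ∀ (z : ℂ) (N : ℕ), deriv f z =
      (∏ n ∈ Finset.Icc 1 N, (φ : ℂ)⁻¹ * f (((2 * φ : ℂ)⁻¹) ^ n * z)) *
        deriv f (((2 * φ : ℂ)⁻¹) ^ N * z) := by
    intro z N
    induction N with
    | zero => simp
    | succ N ih =>
      rw [Finset.prod_Icc_succ_top (Nat.one_le_iff_ne_zero.mpr (Nat.succ_ne_zero N))]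
      rw [ih, key (((2 * φ : ℂ)⁻¹) ^ N * z)]
      rw [show (2 * φ : ℂ)⁻¹ * (((2 * φ : ℂ)⁻¹) ^ N * z)
        = ((2 * φ : ℂ)⁻¹) ^ (N + 1) * z by ring]
      ring
  -- continuity of deriv f
  have hcd : Continuous (deriv f) := by
    have := (hf.contDiff (n := 2)).continuous_deriv (by norm_num)
    exact this
  intro z
  -- w_N → 0
  have hwz : Filter.Tendsto (fun N : ℕ => ((2 * φ : ℂ)⁻¹) ^ N * z)
      Filter.atTop (nhds 0) := by
    have hnorm : ‖(2 * φ : ℂ)⁻¹‖ < 1 := by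
      rw [norm_inv]
      rw [show (2 * φ : ℂ) = ((2 * φ : ℝ) : ℂ) by push_cast; ring]
      rw [Complex.norm_real, Real.norm_eq_abs, abs_of_pos (by linarith)]
      rw [inv_lt_one_iff₀]; right; linarith
    have := tendsto_pow_atTop_nhds_zero_of_norm_lt_one hnorm
    simpa using this.mul_const z
  have hd1 : Filter.Tendsto (fun N : ℕ => deriv f (((2 * φ : ℂ)⁻¹) ^ N * z))
      Filter.atTop (nhds 1) := by
    have := (hcd.tendsto 0).comp hwz
    simpa [h1, Function.comp_def] using this
  have hne : ∀ᶠ N : ℕ in Filter.atTop,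
      deriv f (((2 * φ : ℂ)⁻¹) ^ N * z) ≠ 0 :=
    hd1.eventually_ne one_ne_zero
  have htend : Filter.Tendsto
      (fun N : ℕ => deriv f z / deriv f (((2 * φ : ℂ)⁻¹) ^ N * z))
      Filter.atTop (nhds (deriv f z)) := by
    have := (tendsto_const_nhds (x := deriv f z) (f := Filter.atTop (α := ℕ))).div hd1 one_ne_zero
    simpa [Pi.div_def] using this
  refine Filter.Tendsto.congr' ?_ htend
  filter_upwards [hne] with N hN
  rw [div_eq_iff hN]
  exact prodid z N
end

section
/- If f is entire with f(2φz) = f(z)² − 1, f(0) = φ, f'(0) = 1, and all Taylor coefficients of f at 0 are positive, then f is strictly increasing on [0,∞) and f has a zero on the negative real axis. -/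
set_option maxHeartbeats 1000000 in
theorem increasing_and_negative_zero (φ : ℝ) (hφ : φ = (1 + Real.sqrt 5) / 2)
    (f : ℂ → ℂ) (hf : Differentiable ℂ f)
    (heq : ∀ z : ℂ, f (2 * φ * z) = f z ^ 2 - 1)
    (h0 : f 0 = (φ : ℂ)) (h1 : deriv f 0 = 1)
    (hreal : ∀ x : ℝ, (f x).im = 0)
    (hpos : ∀ n ≥ 1, 0 < (iteratedDeriv n f 0).re) :
    StrictMonoOn (fun x : ℝ => (f x).re) (Set.Ici 0) ∧
    ∃ x : ℝ, x < 0 ∧ f x = 0 := by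
  have hs5 : Real.sqrt 5 ^ 2 = 5 := Real.sq_sqrt (by norm_num)
  have hs5' : (2:ℝ) ≤ Real.sqrt 5 := by nlinarith [Real.sqrt_nonneg 5]
  have hφ1 : 1 < φ := by rw [hφ]; nlinarith
  have hφsq : φ ^ 2 = φ + 1 := by rw [hφ]; nlinarith
  set g : ℝ → ℝ := fun x => (f x).re with hg
  -- f is real on ℝ
  have hfr : ∀ x : ℝ, f x = (g x : ℂ) := by
    intro x
    apply Complex.ext
    · simp [hg]
    · simp [hreal x, hg]
  -- Taylor series of g
  have hsum : ∀ x : ℝ, HasSum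
      (fun n : ℕ => (((Nat.factorial n : ℕ) : ℝ)⁻¹ * x ^ n) * (iteratedDeriv n f 0).re) (g x) := by
    intro x
    have H := Complex.hasSum_taylorSeries_of_entire hf 0 x
    have H2 := Complex.hasSum_re H
    convert H2 using 2 with n
    have : (((Nat.factorial n : ℕ) : ℂ)⁻¹ • ((x : ℂ) - 0) ^ n • iteratedDeriv n f 0)
        = ((((Nat.factorial n : ℕ) : ℝ)⁻¹ * x ^ n : ℝ) : ℂ) * iteratedDeriv n f 0 := by
      simp only [smul_eq_mul, sub_zero]
      push_cast
      ring
    rw [this, Complex.re_ofReal_mul]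
  have hc1 : (iteratedDeriv 1 f 0).re = 1 := by
    rw [iteratedDeriv_one, h1]; simp
  -- strict monotonicity
  have hmono : StrictMonoOn g (Set.Ici 0) := by
    intro x hx y hy hxy
    have hsub := (hsum y).sub (hsum x)
    have hle : y - x ≤ g y - g x := by
      have := le_hasSum hsub 1 ?_
      · simpa [iteratedDeriv_one, h1] using this
      · intro n hn
        rcases Nat.eq_zero_or_pos n with h | h
        · subst h; simp
        · have hn1 : 1 ≤ n := h
          have hcn : 0 < (iteratedDeriv n f 0).re := hpos n hn1
          have hxn : x ^ n ≤ y ^ n := pow_le_pow_left₀ hx hxy.le n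
          have : (0:ℝ) ≤ (((Nat.factorial n : ℕ) : ℝ)⁻¹ * (y ^ n - x ^ n)) * (iteratedDeriv n f 0).re := by
            apply mul_nonneg
            · apply mul_nonneg
              · positivity
              · linarith
            · exact hcn.le
          nlinarith
    linarith
  refine ⟨hmono, ?_⟩
  -- continuity of g
  have hgc : Continuous g :=
    Complex.continuous_re.comp (hf.continuous.comp Complex.continuous_ofReal)
  have hg0 : g 0 = φ := by
    show (f ((0:ℝ):ℂ)).re = φ
    norm_num [h0]
  have hφpos : 0 < φ := by linarith
  -- functional equation on ℝ
  have hre : ∀ x : ℝ, g (2 * φ * x) = g x ^ 2 - 1 := by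
    intro x
    have h := heq (x : ℂ)
    have hcast : (2 * (φ:ℂ) * (x:ℂ)) = (((2 * φ * x : ℝ)) : ℂ) := by push_cast; ring
    rw [hcast, hfr x, hfr (2 * φ * x)] at h
    have : ((g (2 * φ * x) : ℂ)) = (((g x ^ 2 - 1 : ℝ)) : ℂ) := by
      rw [h]; push_cast; ring
    exact_mod_cast this
  -- It suffices to find a point where g ≤ 0
  have key : ∀ a : ℝ, a < 0 → g a ≤ 0 → ∃ x : ℝ, x < 0 ∧ f x = 0 := by
    intro a ha hga
    have hIVT := intermediate_value_Icc ha.le (hgc.continuousOn (s := Set.Icc a 0))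
    have h0mem : (0:ℝ) ∈ Set.Icc (g a) (g 0) := by
      constructor
      · exact hga
      · rw [hg0]; linarith
    obtain ⟨c, hc, hgc0⟩ := hIVT h0mem
    have hcne : c ≠ 0 := by
      intro h; rw [h, hg0] at hgc0; linarith
    refine ⟨c, lt_of_le_of_ne hc.2 hcne, ?_⟩
    rw [hfr c, hgc0]
    simp
  by_contra hcon
  push_neg at hcon
  -- so g > 0 on negatives
  have hgpos : ∀ a : ℝ, a < 0 → 0 < g a := by
    intro a ha
    by_contra h
    push_neg at h
    obtain ⟨x, hx, hfx⟩ := key a ha h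
    exact (hcon x hx) hfx
  -- hence g > 1 on negatives
  have hg1 : ∀ a : ℝ, a < 0 → 1 < g a := by
    intro a ha
    by_contra h
    push_neg at h
    have h2 : g (2 * φ * a) ≤ 0 := by
      rw [hre a]
      nlinarith [hgpos a ha]
    have : 0 < g (2 * φ * a) := hgpos _ (by nlinarith)
    linarith
  -- find x₀ < 0 with g x₀ < φ using g'(0) = 1
  obtain ⟨x₀, hx₀neg, hx₀lt⟩ : ∃ x₀ : ℝ, x₀ < 0 ∧ g x₀ < φ := by
    have hd : HasDerivAt f 1 ((0:ℝ):ℂ) := by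
      have := (hf 0).hasDerivAt
      rw [h1] at this
      simpa using this
    have hdg : HasDerivAt g 1 0 := by
      have := hd.real_of_complex
      simpa [hg] using this
    have hslope := hasDerivAt_iff_tendsto_slope.mp hdg
    have hev : ∀ᶠ x in nhdsWithin 0 {(0:ℝ)}ᶜ, 0 < slope g 0 x :=
      hslope.eventually (eventually_gt_nhds one_pos)
    have hmono' : nhdsWithin (0:ℝ) (Set.Iio 0) ≤ nhdsWithin 0 {(0:ℝ)}ᶜ :=
      nhdsWithin_mono 0 (fun x hx => ne_of_lt hx)
    have hev' : ∀ᶠ x in nhdsWithin (0:ℝ) (Set.Iio 0),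
        0 < slope g 0 x ∧ x ∈ Set.Iio (0:ℝ) :=
      (hev.filter_mono hmono').and self_mem_nhdsWithin
    obtain ⟨x, hx1, hx2⟩ := hev'.exists
    refine ⟨x, hx2, ?_⟩
    rw [slope_def_field] at hx1
    have hxne : x - 0 < 0 := by simpa using hx2
    rcases div_pos_iff.mp hx1 with ⟨_, h⟩ | ⟨h, _⟩
    · linarith
    · rw [hg0] at h
      linarith
  set t₀ := g x₀ with ht₀
  have ht₀1 : 1 < t₀ := hg1 x₀ hx₀neg
  set δ := (φ - t₀) * φ with hδ
  have hδpos : 0 < δ := by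
    apply mul_pos _ hφpos
    linarith
  -- iterate the functional equation forward
  have hiter : ∀ n : ℕ, (2*φ)^n * x₀ < 0 ∧ g ((2*φ)^n * x₀) ≤ t₀ - n * δ := by
    intro n
    induction n with
    | zero => exact ⟨by simpa using hx₀neg, by simp; exact le_rfl⟩
    | succ n ih =>
      obtain ⟨hpt, hbd⟩ := ih
      have hpt' : (2*φ)^(n+1) * x₀ < 0 := by
        have : (0:ℝ) < (2*φ)^(n+1) := by positivity
        nlinarith
      refine ⟨hpt', ?_⟩
      have heqn : g ((2*φ)^(n+1) * x₀) = g ((2*φ)^n * x₀) ^ 2 - 1 := by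
        have : (2*φ)^(n+1) * x₀ = 2 * φ * ((2*φ)^n * x₀) := by ring
        rw [this, hre]
      set t := g ((2*φ)^n * x₀) with ht
      have ht1 : 1 < t := hg1 _ hpt
      have htφ : t < φ := by
        have : (n:ℝ) * δ ≥ 0 := by positivity
        calc t ≤ t₀ - n * δ := hbd
        _ ≤ t₀ := by linarith
        _ < φ := by
          have := hδpos
          nlinarith
      rw [heqn]
      -- t^2 - 1 = t - (φ - t)(t + φ - 1) ≤ t - δ
      have hfac : t ^ 2 - 1 = t - (φ - t) * (t + φ - 1) := by nlinarith [hφsq]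
      have hstep : (φ - t) * (t + φ - 1) ≥ δ := by
        have h1' : φ - t ≥ φ - t₀ := by
          have : (n:ℝ) * δ ≥ 0 := by positivity
          linarith
        have h2' : t + φ - 1 ≥ φ := by linarith
        have h3' : 0 < φ - t₀ := by nlinarith
        nlinarith
      have : t ^ 2 - 1 ≤ t - δ := by linarith [hfac, hstep]
      push_cast
      linarith
  -- choose n large
  obtain ⟨n, hn⟩ := exists_nat_gt ((t₀ - 1) / δ)
  have hn' : t₀ - 1 < n * δ := by
    rw [div_lt_iff₀ hδpos] at hn
    linarith
  obtain ⟨hpt, hbd⟩ := hiter n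
  have := hg1 _ hpt
  linarith
end
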